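/- Let P ⊆ ℝ^d be a full-dimensional lattice polytope with codegree a satisfying P = ⌊aP⌋ + {P}. Then for every integer k ≥ 1, one has kP = ⌊(k+a−1)P⌋ + {P}. -/

import Mathlib

open Set Pointwise

/-- The set of lattice points of `ℝ^d`. -/
def latticePoints (d : ℕ) : Set (Fin d → ℝ) :=
  {x | ∀ i, ∃ z : ℤ, x i = (z : ℝ)}

/-- A lattice polytope: the convex hull of a finite set of lattice points. -/
def IsLatticePolytope {d : ℕ} (P : Set (Fin d → ℝ)) : Prop :=
  ∃ V : Finset (Fin d → ℝ), (V : Set (Fin d → ℝ)) ⊆ latticePoints d ∧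
    P = convexHull ℝ (V : Set (Fin d → ℝ))

/-- The natural pairing of an integral linear functional with a point of `ℝ^d`. -/
def pairing {d : ℕ} (n : Fin d → ℤ) (x : Fin d → ℝ) : ℝ :=
  ∑ i, (n i : ℝ) * x i

/-- `P = {x | n_F(x) ≥ -h_F}` is an irredundant presentation with primitive
integral inner normals, i.e. the facet presentation of `P`. -/
def IsFacetPresentation {d m : ℕ} (P : Set (Fin d → ℝ))
    (n : Fin m → Fin d → ℤ) (h : Fin m → ℤ) : Prop :=
  P = {x | ∀ i, pairing (n i) x ≥ -(h i : ℝ)} ∧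
  (∀ i, Finset.univ.gcd (n i) = 1) ∧
  (∀ i, ∃ x : Fin d → ℝ, pairing (n i) x < -(h i : ℝ) ∧
    ∀ j, j ≠ i → pairing (n j) x ≥ -(h j : ℝ))

/-- `a` is the codegree of `P`: the least `k ≥ 1` such that `int(kP)` contains
a lattice point. -/
def IsCodegree {d : ℕ} (P : Set (Fin d → ℝ)) (a : ℕ) : Prop :=
  1 ≤ a ∧ (interior ((a : ℝ) • P) ∩ latticePoints d).Nonempty ∧
    ∀ k : ℕ, 1 ≤ k → (interior ((k : ℝ) • P) ∩ latticePoints d).Nonempty → a ≤ k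

/-- The floor polytope `⌊R⌋ = conv(int(R) ∩ ℤ^d)`. -/
def floorPoly {d : ℕ} (R : Set (Fin d → ℝ)) : Set (Fin d → ℝ) :=
  convexHull ℝ (interior R ∩ latticePoints d)

/-- The remainder polytope `{P} = conv{x ∈ ℤ^d | n_F(x) ≥ (a-1)h_F - 1}`,
defined in terms of the facet presentation data and the codegree `a`. -/
def remPoly {d m : ℕ} (n : Fin m → Fin d → ℤ) (h : Fin m → ℤ) (a : ℕ) :
    Set (Fin d → ℝ) :=
  convexHull ℝ {x | x ∈ latticePoints d ∧
    ∀ i, pairing (n i) x ≥ ((a : ℝ) - 1) * (h i : ℝ) - 1}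

/-- The cone `C_P ⊆ ℝ^d × ℝ` over `P`, in terms of the facet presentation. -/
def coneOver {d m : ℕ} (n : Fin m → Fin d → ℤ) (h : Fin m → ℤ) :
    Set ((Fin d → ℝ) × ℝ) :=
  {p | ∀ i, pairing (n i) p.1 ≥ -(p.2 * (h i : ℝ))}

/-- The interior `int(C_P)` of the cone over `P`. -/
def intCone {d m : ℕ} (n : Fin m → Fin d → ℤ) (h : Fin m → ℤ) :
    Set ((Fin d → ℝ) × ℝ) :=
  {p | ∀ i, pairing (n i) p.1 > -(p.2 * (h i : ℝ))}

/-- The anticanonical set `ant(C_P)` of the cone over `P`. -/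
def antCone {d m : ℕ} (n : Fin m → Fin d → ℤ) (h : Fin m → ℤ) :
    Set ((Fin d → ℝ) × ℝ) :=
  {p | ∀ i, pairing (n i) p.1 ≥ -(p.2 * (h i : ℝ)) - 1}

/-- Lattice points of `ℝ^d × ℝ = ℝ^{d+1}`. -/
def latticePairs (d : ℕ) : Set ((Fin d → ℝ) × ℝ) :=
  {p | p.1 ∈ latticePoints d ∧ ∃ z : ℤ, p.2 = (z : ℝ)}

/-- The nearly Gorenstein condition with respect to a given facet presentation:
`(C_P ∩ ℤ^{d+1}) \ {0} ⊆ (int(C_P) ∩ ℤ^{d+1}) + (ant(C_P) ∩ ℤ^{d+1})`. -/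
def NGIncl {d m : ℕ} (n : Fin m → Fin d → ℤ) (h : Fin m → ℤ) : Prop :=
  (coneOver n h ∩ latticePairs d) \ {(0 : (Fin d → ℝ) × ℝ)} ⊆
    (intCone n h ∩ latticePairs d) + (antCone n h ∩ latticePairs d)

/-- A full-dimensional lattice polytope is nearly Gorenstein if the nearly
Gorenstein inclusion holds for its facet presentation. -/
def NearlyGorenstein {d : ℕ} (P : Set (Fin d → ℝ)) : Prop :=
  ∃ (m : ℕ) (n : Fin m → Fin d → ℤ) (h : Fin m → ℤ),
    IsFacetPresentation P n h ∧ NGIncl n h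

/-- The polar dual `Q* = {y | y(x) ≥ -1 for all x ∈ Q}`. -/
def polarDual {d : ℕ} (Q : Set (Fin d → ℝ)) : Set (Fin d → ℝ) :=
  {y | ∀ x ∈ Q, (∑ i, y i * x i) ≥ -1}

/-- A reflexive polytope: a lattice polytope with `0` in its interior whose
polar dual is again a lattice polytope. -/
def IsReflexive {d : ℕ} (Q : Set (Fin d → ℝ)) : Prop :=
  IsLatticePolytope Q ∧ (0 : Fin d → ℝ) ∈ interior Q ∧
    IsLatticePolytope (polarDual Q)

/-- A Gorenstein polytope: some dilate `kP`, translated by a lattice vector,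
is reflexive. -/
def IsGorenstein {d : ℕ} (P : Set (Fin d → ℝ)) : Prop :=
  ∃ (k : ℕ) (w : Fin d → ℝ), 1 ≤ k ∧ w ∈ latticePoints d ∧
    IsReflexive ((fun x => x - w) '' ((k : ℝ) • P))

/-- The integer decomposition property. -/
def IsIDP {d : ℕ} (P : Set (Fin d → ℝ)) : Prop :=
  ∀ k : ℕ, 1 ≤ k → ∀ x ∈ ((k : ℝ) • P) ∩ latticePoints d,
    ∃ y : Fin k → Fin d → ℝ, (∀ j, y j ∈ P ∩ latticePoints d) ∧ x = ∑ j, y j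

/-- Minkowski indecomposability of a lattice polytope. -/
def IsIndecomposable {d : ℕ} (P : Set (Fin d → ℝ)) : Prop :=
  (¬ ∃ p : Fin d → ℝ, P = {p}) ∧
  ∀ P₁ P₂ : Set (Fin d → ℝ), IsLatticePolytope P₁ → IsLatticePolytope P₂ →
    P = P₁ + P₂ → (∃ p, P₁ = {p}) ∨ (∃ p, P₂ = {p})

/-- A `(0,1)`-polytope: the convex hull of a set of `(0,1)`-vectors. -/
def Is01Polytope {d : ℕ} (P : Set (Fin d → ℝ)) : Prop :=
  ∃ V : Finset (Fin d → ℝ), (∀ v ∈ V, ∀ i, v i = 0 ∨ v i = 1) ∧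
    P = convexHull ℝ (V : Set (Fin d → ℝ))

section Aux

open Set Pointwise

variable {d m : ℕ}

lemma pairing_add (n : Fin d → ℤ) (x y : Fin d → ℝ) :
    pairing n (x + y) = pairing n x + pairing n y := by
  simp [pairing, mul_add, Finset.sum_add_distrib]

lemma pairing_smul (n : Fin d → ℤ) (c : ℝ) (x : Fin d → ℝ) :
    pairing n (c • x) = c * pairing n x := by
  simp only [pairing, Finset.mul_sum, Pi.smul_apply, smul_eq_mul]
  exact Finset.sum_congr rfl fun i _ => by ring

lemma pairing_isLinear (n : Fin d → ℤ) : IsLinearMap ℝ (pairing n) :=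
  ⟨pairing_add n, fun c x => pairing_smul n c x⟩

lemma continuous_pairing (n : Fin d → ℤ) : Continuous (pairing n) :=
  continuous_finset_sum _ fun i _ => continuous_const.mul (continuous_apply i)

lemma pairing_int {n : Fin d → ℤ} {x : Fin d → ℝ} (hx : x ∈ latticePoints d) :
    ∃ z : ℤ, pairing n x = (z : ℝ) := by
  choose z hz using hx
  exact ⟨∑ i, n i * z i, by simp [pairing, hz]⟩

lemma lattice_add {x y : Fin d → ℝ} (hx : x ∈ latticePoints d)
    (hy : y ∈ latticePoints d) : x + y ∈ latticePoints d := by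
  intro i
  obtain ⟨z, hz⟩ := hx i
  obtain ⟨w, hw⟩ := hy i
  exact ⟨z + w, by simp [hz, hw]⟩

lemma lattice_nsmul {x : Fin d → ℝ} (hx : x ∈ latticePoints d) (j : ℕ) :
    (j : ℝ) • x ∈ latticePoints d := by
  intro i
  obtain ⟨z, hz⟩ := hx i
  exact ⟨j * z, by simp [hz]⟩

lemma convex_Hset (n : Fin m → Fin d → ℤ) (c : Fin m → ℝ) :
    Convex ℝ {x : Fin d → ℝ | ∀ i, pairing (n i) x ≥ c i} := by
  have : {x : Fin d → ℝ | ∀ i, pairing (n i) x ≥ c i}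
      = ⋂ i, {x | c i ≤ pairing (n i) x} := by
    ext x; simp only [Set.mem_iInter, Set.mem_setOf_eq, ge_iff_le]
  rw [this]
  exact convex_iInter fun i => convex_halfSpace_ge (pairing_isLinear (n i)) _

lemma dilate_eq {P : Set (Fin d → ℝ)} {n : Fin m → Fin d → ℤ} {h : Fin m → ℤ}
    (hH : P = {x | ∀ i, pairing (n i) x ≥ -(h i : ℝ)}) {c : ℝ} (hc : 0 < c) :
    c • P = {x | ∀ i, pairing (n i) x ≥ -(c * (h i : ℝ))} := by
  ext x
  rw [mem_smul_set_iff_inv_smul_mem₀ hc.ne' P x, hH]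
  simp only [Set.mem_setOf_eq, pairing_smul]
  constructor
  · intro hx i
    have := hx i
    have h2 : c * (c⁻¹ * pairing (n i) x) ≥ c * (-(h i : ℝ)) :=
      mul_le_mul_of_nonneg_left this hc.le
    rw [← mul_assoc, mul_inv_cancel₀ hc.ne', one_mul] at h2
    linarith
  · intro hx i
    have := hx i
    have h2 : c⁻¹ * (-(c * (h i : ℝ))) ≤ c⁻¹ * pairing (n i) x :=
      mul_le_mul_of_nonneg_left this (inv_nonneg.mpr hc.le)
    calc -(h i : ℝ) = c⁻¹ * (-(c * (h i : ℝ))) := by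
          field_simp
      _ ≤ c⁻¹ * pairing (n i) x := h2

lemma normal_pos {n : Fin m → Fin d → ℤ} (hgcd : ∀ i, Finset.univ.gcd (n i) = 1)
    (i : Fin m) : 0 < pairing (n i) (fun j => (n i j : ℝ)) := by
  have hne : ∃ j, n i j ≠ 0 := by
    by_contra hall
    push_neg at hall
    have : Finset.univ.gcd (n i) = 0 :=
      Finset.gcd_eq_zero_iff.mpr fun j _ => hall j
    rw [hgcd i] at this
    exact one_ne_zero this
  obtain ⟨j, hj⟩ := hne
  have hjd : 0 < d := Fin.pos_iff_nonempty.mpr ⟨j⟩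
  apply Finset.sum_pos' (fun k _ => mul_self_nonneg _)
  refine ⟨j, Finset.mem_univ j, ?_⟩
  have : (n i j : ℝ) ≠ 0 := Int.cast_ne_zero.mpr hj
  exact mul_self_pos.mpr this

lemma interior_dilate {P : Set (Fin d → ℝ)} {n : Fin m → Fin d → ℤ} {h : Fin m → ℤ}
    (hH : P = {x | ∀ i, pairing (n i) x ≥ -(h i : ℝ)})
    (hgcd : ∀ i, Finset.univ.gcd (n i) = 1) {c : ℝ} (hc : 0 < c) :
    interior (c • P) = {x | ∀ i, pairing (n i) x > -(c * (h i : ℝ))} := by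
  rw [dilate_eq hH hc]
  set S : Set (Fin d → ℝ) := {x | ∀ i, pairing (n i) x ≥ -(c * (h i : ℝ))} with hS
  apply subset_antisymm
  · intro x hx i
    set w : Fin d → ℝ := fun j => (n i j : ℝ) with hw
    have hSw : 0 < pairing (n i) w := normal_pos hgcd i
    have hcont : Continuous (fun t : ℝ => x - t • w) := by fun_prop
    have hmem : (fun t : ℝ => x - t • w) ⁻¹' interior S ∈ nhds (0 : ℝ) := by
      apply hcont.continuousAt.preimage_mem_nhds
      rw [isOpen_interior.mem_nhds_iff]
      simpa using hx
    rw [Metric.mem_nhds_iff] at hmem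
    obtain ⟨ε, hε, hball⟩ := hmem
    have ht : x - (ε / 2) • w ∈ S := by
      apply interior_subset
      apply hball
      rw [Metric.mem_ball, Real.dist_eq, sub_zero, abs_of_pos (half_pos hε)]
      linarith
    have := ht i
    have hps : pairing (n i) (x - (ε / 2) • w)
        = pairing (n i) x - (ε / 2) * pairing (n i) w := by
      have : x - (ε / 2) • w = x + (-(ε / 2)) • w := by
        ext j; simp; ring
      rw [this, pairing_add, pairing_smul]; ring
    rw [hps] at this
    nlinarith [half_pos hε]
  · apply interior_maximal
    · intro x hx i; exact (hx i).le
    · have : {x : Fin d → ℝ | ∀ i, pairing (n i) x > -(c * (h i : ℝ))}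
          = ⋂ i, (pairing (n i)) ⁻¹' (Set.Ioi (-(c * (h i : ℝ)))) := by
        ext x
        simp only [Set.mem_iInter, Set.mem_preimage, Set.mem_Ioi, Set.mem_setOf_eq, gt_iff_lt]
      rw [this]
      exact isOpen_iInter_of_finite fun i =>
        (isOpen_Ioi).preimage (continuous_pairing (n i))

end Aux

theorem stmt_5 {d : ℕ} (hd : 1 ≤ d) (P : Set (Fin d → ℝ))
    (hP : IsLatticePolytope P) (hfull : (interior P).Nonempty)
    {m : ℕ} (n : Fin m → Fin d → ℤ) (h : Fin m → ℤ)
    (hpres : IsFacetPresentation P n h)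
    (a : ℕ) (ha : IsCodegree P a)
    (hdecomp : P = floorPoly ((a : ℝ) • P) + remPoly n h a) :
    ∀ k : ℕ, 1 ≤ k →
      (k : ℝ) • P = floorPoly (((k + a - 1 : ℕ) : ℝ) • P) + remPoly n h a := by
  intro k hk
  obtain ⟨j, rfl⟩ : ∃ j, k = j + 1 := ⟨k - 1, by omega⟩
  obtain ⟨hH, hgcd, -⟩ := hpres
  obtain ⟨V, hV, hPV⟩ := hP
  have hconvP : Convex ℝ P := hPV ▸ convex_convexHull ℝ _
  have ha1 : 1 ≤ a := ha.1
  have hNnat : j + 1 + a - 1 = j + a := by omega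
  rw [hNnat]
  set B : Set (Fin d → ℝ) :=
    {x | x ∈ latticePoints d ∧ ∀ i, pairing (n i) x ≥ ((a : ℝ) - 1) * (h i : ℝ) - 1} with hBdef
  have hrem : remPoly n h a = convexHull ℝ B := rfl
  set SN : Set (Fin d → ℝ) := interior (((j + a : ℕ) : ℝ) • P) ∩ latticePoints d with hSNdef
  have hfloorN : floorPoly (((j + a : ℕ) : ℝ) • P) = convexHull ℝ SN := rfl
  set Sa : Set (Fin d → ℝ) := interior ((a : ℝ) • P) ∩ latticePoints d with hSadef
  have hfloora : floorPoly ((a : ℝ) • P) = convexHull ℝ Sa := rfl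
  have hposN : (0 : ℝ) < ((j + a : ℕ) : ℝ) := by
    have : 0 < j + a := by omega
    exact_mod_cast this
  have hposa : (0 : ℝ) < (a : ℝ) := by exact_mod_cast ha1
  have hposk : (0 : ℝ) < ((j + 1 : ℕ) : ℝ) := by
    have : 0 < j + 1 := by omega
    exact_mod_cast this
  have hintN := interior_dilate hH hgcd hposN
  have hinta := interior_dilate hH hgcd hposa
  have claim1 : (j : ℝ) • P + floorPoly ((a : ℝ) • P)
      ⊆ floorPoly (((j + a : ℕ) : ℝ) • P) := by
    rw [hfloora, hfloorN]
    nth_rewrite 1 [hPV]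
    rw [← convexHull_smul, ← convexHull_add]
    apply convexHull_mono
    rintro z ⟨u, ⟨v, hv, rfl⟩, w, hw, rfl⟩
    have hvP : ∀ i, pairing (n i) v ≥ -(h i : ℝ) := by
      have hvmem : v ∈ P := hPV ▸ subset_convexHull ℝ _ hv
      rw [hH] at hvmem; exact hvmem
    have hwU : ∀ i, pairing (n i) w > -((a : ℝ) * (h i : ℝ)) := by
      have := hw.1; rw [hinta] at this; exact this
    refine ⟨?_, lattice_add (lattice_nsmul (hV hv) j) hw.2⟩
    rw [hintN]
    intro i
    rw [pairing_add, pairing_smul]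
    have h1 : (j : ℝ) * (-(h i : ℝ)) ≤ (j : ℝ) * pairing (n i) v :=
      mul_le_mul_of_nonneg_left (hvP i) (Nat.cast_nonneg j)
    have h2 := hwU i
    push_cast
    nlinarith
  have claim2 : floorPoly (((j + a : ℕ) : ℝ) • P) + remPoly n h a
      ⊆ ((j + 1 : ℕ) : ℝ) • P := by
    rw [hfloorN, hrem, ← convexHull_add, dilate_eq hH hposk]
    apply convexHull_min
    · rintro z ⟨x, hx, y, hy, rfl⟩
      simp only [Set.mem_setOf_eq]
      intro i
      have hxU : pairing (n i) x > -(((j + a : ℕ) : ℝ) * (h i : ℝ)) := by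
        have := hx.1; rw [hintN] at this; exact this i
      obtain ⟨z', hz'⟩ := pairing_int (n := n i) hx.2
      rw [hz'] at hxU
      have h2 : -((j + a : ℤ) * h i) < z' := by exact_mod_cast hxU
      have h3 : -((j + a : ℤ) * h i) + 1 ≤ z' := Int.add_one_le_iff.mpr h2
      have hzge : -(((j + a : ℕ) : ℝ) * (h i : ℝ)) + 1 ≤ (z' : ℝ) := by
        exact_mod_cast h3
      have hyB := hy.2 i
      rw [pairing_add, hz']
      push_cast at hzge hyB ⊢
      linarith
    · exact convex_Hset n _
  have key : ((j + 1 : ℕ) : ℝ) • P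
      = ((j : ℝ) • P + floorPoly ((a : ℝ) • P)) + remPoly n h a := by
    calc ((j + 1 : ℕ) : ℝ) • P = (j : ℝ) • P + P := by
          rw [show ((j + 1 : ℕ) : ℝ) = (j : ℝ) + 1 by push_cast; ring,
            hconvP.add_smul (Nat.cast_nonneg j) zero_le_one, one_smul]
      _ = (j : ℝ) • P + (floorPoly ((a : ℝ) • P) + remPoly n h a) := by
          rw [← hdecomp]
      _ = _ := (add_assoc _ _ _).symm
  refine subset_antisymm ?_ claim2
  calc ((j + 1 : ℕ) : ℝ) • P
      = ((j : ℝ) • P + floorPoly ((a : ℝ) • P)) + remPoly n h a := key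
    _ ⊆ floorPoly (((j + a : ℕ) : ℝ) • P) + remPoly n h a :=
        Set.add_subset_add claim1 Set.Subset.rfl
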